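/- The number of Łukasiewicz paths of length n with no flat step at positive height equals the n-th Motzkin number. Equivalently, the generating function B(x) of such paths satisfies B(x) = (1 − x − √(1 − 2x − 3x²))/(2x²). -/

import Mathlib

/-- A Łukasiewicz path: vertical step components, each `≥ -1`, all partial sums
nonnegative, total sum `0`. -/
def IsLukas (w : List ℤ) : Prop :=
  (∀ s ∈ w, -1 ≤ s) ∧ (∀ k, 0 ≤ (w.take k).sum) ∧ w.sum = 0

/-- No flat step at positive height: every flat step starts at ordinate `0`. -/
def NoFlatAtPosHeight (w : List ℤ) : Prop :=
  ∀ j : ℕ, w[j]? = some 0 → (w.take j).sum = 0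

/-- Motzkin numbers: `M 0 = 1`, `M (n+1) = M n + Σ_{k=0}^{n-1} M k * M (n-1-k)`. -/
def motzkin : ℕ → ℕ
  | 0 => 1
  | n + 1 => motzkin n + ∑ k ∈ (Finset.range n).attach,
      motzkin k.1 * motzkin (n - 1 - k.1)
decreasing_by
  · exact Nat.lt_succ_self n
  · have := Finset.mem_range.mp k.2; omega
  · omega

namespace LukasAux

def conv (p : List ℤ) : List ℤ := p.map (fun s => if s = 0 then -1 else s)

def decode (p q : List ℤ) : List ℤ := ((p.count 0 : ℤ) + 1) :: (conv p ++ (-1 :: q))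

def unconv : ℤ → List ℤ → List ℤ
  | _, [] => []
  | h, s :: r => if s = -1 ∧ h = 0 then 0 :: unconv 0 r else s :: unconv (h + s) r

def Good (h : ℤ) (p : List ℤ) : Prop :=
  (∀ s ∈ p, -1 ≤ s) ∧ (∀ k, 0 ≤ h + (p.take k).sum) ∧
  (∀ j, p[j]? = some 0 → h + (p.take j).sum = 0)

def BGood (w : List ℤ) : Prop := IsLukas w ∧ NoFlatAtPosHeight w

lemma bgood_iff {w : List ℤ} : BGood w ↔ (Good 0 w ∧ w.sum = 0) := by
  constructor
  · rintro ⟨⟨h1, h2, h3⟩, h4⟩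
    exact ⟨⟨h1, fun k => by simpa using h2 k, fun j hj => by simpa using h4 j hj⟩, h3⟩
  · rintro ⟨⟨h1, h2, h4⟩, h3⟩
    exact ⟨⟨h1, fun k => by simpa using h2 k, h3⟩, fun j hj => by simpa using h4 j hj⟩

@[simp] lemma conv_length (p : List ℤ) : (conv p).length = p.length := by simp [conv]

lemma conv_take (p : List ℤ) (k : ℕ) : conv (p.take k) = (conv p).take k := by
  simp [conv, List.map_take]

lemma conv_sum (p : List ℤ) : (conv p).sum = p.sum - p.count 0 := by
  induction p with
  | nil => simp [conv]
  | cons a r ih =>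
    by_cases ha : a = 0 <;>
      simp [conv, List.count_cons, ha] at ih ⊢ <;> push_cast <;> omega

lemma conv_nonzero {p : List ℤ} {x : ℤ} (hx : x ∈ conv p) : x ≠ 0 := by
  simp only [conv, List.mem_map] at hx
  obtain ⟨a, _, rfl⟩ := hx
  split <;> omega

lemma unconv_conv {p : List ℤ} : ∀ {h : ℤ}, Good h p → unconv h (conv p) = p := by
  induction p with
  | nil => intro h _; rfl
  | cons s r ih =>
    intro h hg
    obtain ⟨h1, h2, h3⟩ := hg
    by_cases hs : s = 0
    · subst hs
      have hh : h = 0 := by simpa using h3 0 rfl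
      subst hh
      have hgr : Good 0 r := by
        refine ⟨fun x hx => h1 x (List.mem_cons_of_mem _ hx), fun k => ?_, fun j hj => ?_⟩
        · simpa using h2 (k + 1)
        · have := h3 (j + 1) (by simpa using hj)
          simpa using this
      have hconv : conv ((0:ℤ) :: r) = -1 :: conv r := by simp [conv]
      rw [hconv, unconv, if_pos ⟨rfl, rfl⟩, ih hgr]
    · have hne : ¬ (s = -1 ∧ h = 0) := by
        rintro ⟨rfl, rfl⟩
        have := h2 1
        simp [List.take_succ_cons] at this
      have hgr : Good (h + s) r := by
        refine ⟨fun x hx => h1 x (List.mem_cons_of_mem _ hx), fun k => ?_, fun j hj => ?_⟩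
        · have := h2 (k + 1)
          simp only [List.take_succ_cons, List.sum_cons] at this
          linarith
        · have := h3 (j + 1) (by simpa using hj)
          simp only [List.take_succ_cons, List.sum_cons] at this
          linarith
      have hconv : conv (s :: r) = s :: conv r := by simp [conv, hs]
      rw [hconv, unconv, if_neg hne, ih hgr]

lemma conv_unconv : ∀ (m : List ℤ) (h : ℤ), (∀ x ∈ m, x ≠ 0) → conv (unconv h m) = m := by
  intro m
  induction m with
  | nil => intro h _; rfl
  | cons s r ih =>
    intro h hm
    by_cases hc : s = -1 ∧ h = 0
    · obtain ⟨rfl, rfl⟩ := hc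
      rw [unconv, if_pos ⟨rfl, rfl⟩]
      have hconv : conv ((0:ℤ) :: unconv 0 r) = -1 :: conv (unconv 0 r) := by simp [conv]
      rw [hconv, ih 0 (fun x hx => hm x (List.mem_cons_of_mem _ hx))]
    · rw [unconv, if_neg hc]
      have hs : s ≠ 0 := hm s (List.mem_cons_self)
      have hconv : conv (s :: unconv (h + s) r) = s :: conv (unconv (h + s) r) := by
        simp [conv, hs]
      rw [hconv, ih (h + s) (fun x hx => hm x (List.mem_cons_of_mem _ hx))]

lemma unconv_spec : ∀ (m : List ℤ) (h : ℤ), 0 ≤ h → (∀ x ∈ m, -1 ≤ x) → (∀ x ∈ m, x ≠ 0) →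
    (∀ l, (m.drop l).sum ≤ 0) → h + m.sum ≤ 0 →
    Good h (unconv h m) ∧ h + (unconv h m).sum = 0 := by
  intro m
  induction m with
  | nil =>
    intro h h0 _ _ _ hs
    simp only [List.sum_nil, add_zero] at hs
    constructor
    · refine ⟨by simp [unconv], fun k => by simpa [unconv] using h0, fun j hj => by simp [unconv] at hj⟩
    · simp only [unconv, List.sum_nil, add_zero]; omega
  | cons s r ih =>
    intro h h0 hge hne hdrop hsum
    have hs1 : -1 ≤ s := hge s (List.mem_cons_self)
    have hs0 : s ≠ 0 := hne s (List.mem_cons_self)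
    simp only [List.sum_cons] at hsum
    by_cases hc : s = -1 ∧ h = 0
    · obtain ⟨rfl, rfl⟩ := hc
      have hr := ih 0 le_rfl (fun x hx => hge x (List.mem_cons_of_mem _ hx))
        (fun x hx => hne x (List.mem_cons_of_mem _ hx))
        (fun l => by simpa using hdrop (l + 1))
        (by have := hdrop 1; simpa using this)
      obtain ⟨⟨g1, g2, g3⟩, g4⟩ := hr
      rw [unconv, if_pos ⟨rfl, rfl⟩]
      refine ⟨⟨?_, ?_, ?_⟩, ?_⟩
      · intro x hx
        rcases List.mem_cons.mp hx with rfl | hx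
        · norm_num
        · exact g1 x hx
      · intro k
        cases k with
        | zero => simp
        | succ k =>
          have := g2 k
          simp only [List.take_succ_cons, List.sum_cons]
          linarith
      · intro j hj
        cases j with
        | zero => simp
        | succ j =>
          have := g3 j (by simpa using hj)
          simp only [List.take_succ_cons, List.sum_cons]
          linarith
      · simp only [List.sum_cons]
        linarith
    · have hpos : 0 ≤ h + s := by
        rcases (by omega : s = -1 ∨ 1 ≤ s) with rfl | hs
        · rcases (by tauto : ¬ (h = 0)) with hh
          omega
        · omega
      have hr := ih (h + s) hpos (fun x hx => hge x (List.mem_cons_of_mem _ hx))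
        (fun x hx => hne x (List.mem_cons_of_mem _ hx))
        (fun l => by simpa using hdrop (l + 1))
        (by linarith)
      obtain ⟨⟨g1, g2, g3⟩, g4⟩ := hr
      rw [unconv, if_neg hc]
      refine ⟨⟨?_, ?_, ?_⟩, ?_⟩
      · intro x hx
        rcases List.mem_cons.mp hx with rfl | hx
        · exact hs1
        · exact g1 x hx
      · intro k
        cases k with
        | zero => simpa using h0
        | succ k =>
          have := g2 k
          simp only [List.take_succ_cons, List.sum_cons]
          linarith
      · intro j hj
        cases j with
        | zero => simp at hj; exact absurd hj hs0
        | succ j =>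
          have := g3 j (by simpa using hj)
          simp only [List.take_succ_cons, List.sum_cons]
          linarith
      · simp only [List.sum_cons]
        linarith

lemma unconv_length : ∀ (m : List ℤ) (h : ℤ), (unconv h m).length = m.length := by
  intro m
  induction m with
  | nil => intro h; rfl
  | cons s r ih =>
    intro h
    by_cases hc : s = -1 ∧ h = 0
    · rw [unconv, if_pos hc]; simp [ih]
    · rw [unconv, if_neg hc]; simp [ih]

lemma decode_take_low (p q : List ℤ) (k : ℕ) (hk : k ≤ p.length) :
    ((decode p q).take (k + 1)).sum
      = (p.count 0 : ℤ) + 1 + (p.take k).sum - ((p.take k).count 0 : ℤ) := by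
  have h1 : (conv p ++ (-1 :: q)).take k = (conv p).take k := by
    rw [List.take_append]
    have hz : k - (conv p).length = 0 := by rw [conv_length]; omega
    rw [hz]
    simp
  rw [decode, List.take_succ_cons, List.sum_cons, h1, ← conv_take, conv_sum]
  ring

lemma decode_take_high (p q : List ℤ) (hp : p.sum = 0) (k : ℕ) :
    ((decode p q).take (p.length + 2 + k)).sum = (q.take k).sum := by
  have h0 : p.length + 2 + k = (p.length + 1 + k) + 1 := by omega
  have h1 : (conv p ++ (-1 :: q)).take (p.length + 1 + k) = conv p ++ (-1 :: q.take k) := by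
    rw [List.take_append]
    have h2 : (conv p).take (p.length + 1 + k) = conv p := by
      apply List.take_of_length_le; simp; omega
    have h3 : p.length + 1 + k - (conv p).length = k + 1 := by simp; omega
    rw [h2, h3, List.take_succ_cons]
  rw [h0, decode, List.take_succ_cons, List.sum_cons, h1, List.sum_append, conv_sum, hp,
    List.sum_cons]
  ring

lemma decode_take_pos {p : List ℤ} (q : List ℤ) (hp : BGood p) (k : ℕ) (hk1 : 1 ≤ k)
    (hk2 : k ≤ p.length + 1) : 1 ≤ ((decode p q).take k).sum := by
  obtain ⟨⟨hg1, hg2, _⟩, hpsum⟩ := bgood_iff.mp hp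
  obtain ⟨l, rfl⟩ : ∃ l, k = l + 1 := ⟨k - 1, by omega⟩
  rw [decode_take_low p q l (by omega)]
  have hc : ((p.take l).count 0 : ℤ) ≤ (p.count 0 : ℤ) := by
    exact_mod_cast Nat.cast_le.mpr ((List.take_sublist l p).count_le 0)
  have := hg2 l
  simp only [zero_add] at this
  linarith

lemma decode_take_ret {p : List ℤ} (q : List ℤ) (hp : p.sum = 0) :
    ((decode p q).take (p.length + 2)).sum = 0 := by
  have := decode_take_high p q hp 0
  simpa using this

lemma decode_length (p q : List ℤ) : (decode p q).length = p.length + q.length + 2 := by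
  simp [decode]; omega

lemma decode_bgood {p q : List ℤ} (hp : BGood p) (hq : BGood q) : BGood (decode p q) := by
  obtain ⟨⟨hp1, hp2, _⟩, hpsum⟩ := bgood_iff.mp hp
  obtain ⟨⟨hq1, hq2, hq3⟩, hqsum⟩ := bgood_iff.mp hq
  rw [bgood_iff]
  refine ⟨⟨?_, ?_, ?_⟩, ?_⟩
  · -- steps ≥ -1
    intro s hs
    rw [decode] at hs
    rcases List.mem_cons.mp hs with rfl | hs
    · have : (0:ℤ) ≤ (p.count 0 : ℤ) := Int.ofNat_nonneg _
      omega
    · rcases List.mem_append.mp hs with hs | hs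
      · rcases List.mem_map.mp hs with ⟨a, ha, rfl⟩
        have := hp1 a ha
        split <;> omega
      · rcases List.mem_cons.mp hs with rfl | hs
        · omega
        · exact hq1 s hs
  · -- prefix sums nonneg
    intro k
    rcases Nat.lt_or_ge k 1 with hk | hk
    · interval_cases k <;> simp
    rcases Nat.lt_or_ge k (p.length + 2) with hk2 | hk2
    · have := decode_take_pos q hp k hk (by omega)
      linarith
    · obtain ⟨k', rfl⟩ : ∃ k', k = p.length + 2 + k' := ⟨k - (p.length + 2), by omega⟩
      rw [decode_take_high p q hpsum]
      simpa using hq2 k'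
  · -- no flat at positive height
    intro j hj
    match j, hj with
    | 0, hj =>
      rw [decode] at hj
      simp at hj
      omega
    | (i+1), hj =>
      rw [decode] at hj
      simp only [List.getElem?_cons_succ] at hj
      rcases Nat.lt_or_ge i (conv p).length with hi | hi
      · rw [List.getElem?_append_left hi] at hj
        have : (0:ℤ) ∈ conv p := List.mem_of_getElem? hj
        exact absurd rfl (conv_nonzero this)
      · rw [List.getElem?_append_right hi] at hj
        rcases Nat.eq_or_lt_of_le hi with hi0 | hi2
        · rw [← hi0] at hj
          simp at hj
        · obtain ⟨i', hi'⟩ : ∃ i', i - (conv p).length = i' + 1 :=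
            ⟨i - (conv p).length - 1, by omega⟩
          rw [hi'] at hj
          simp only [List.getElem?_cons_succ] at hj
          have hq0 := hq3 i' hj
          have hieq : i + 1 = p.length + 2 + i' := by
            rw [conv_length] at hi' hi2
            omega
          rw [hieq, decode_take_high p q hpsum]
          simpa using hq0
  · -- total sum
    rw [decode]
    simp only [List.sum_cons, List.sum_append, conv_sum, hpsum, List.sum_cons, hqsum]
    ring

lemma decode_inj {p q p' q' : List ℤ} (hp : BGood p) (hq : BGood q) (hp' : BGood p')
    (hq' : BGood q') (h : decode p q = decode p' q') : p = p' ∧ q = q' := by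
  have hlen : ∀ {a b a' b' : List ℤ}, BGood a → BGood a' → decode a b = decode a' b' →
      a.length < a'.length → False := by
    intro a b a' b' ha ha' heq hlt
    have h0 : ((decode a b).take (a.length + 2)).sum = 0 :=
      decode_take_ret b (bgood_iff.mp ha).2
    have h1 : 1 ≤ ((decode a' b').take (a.length + 2)).sum :=
      decode_take_pos b' ha' (a.length + 2) (by omega) (by omega)
    rw [heq] at h0
    omega
  have hl : p.length = p'.length := by
    rcases Nat.lt_trichotomy p.length p'.length with h1 | h1 | h1
    · exact absurd (hlen hp hp' h h1) (by simp)
    · exact h1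
    · exact absurd (hlen hp' hp h.symm h1) (by simp)
  rw [decode, decode] at h
  have htl : conv p ++ (-1 :: q) = conv p' ++ (-1 :: q') := (List.cons.injEq _ _ _ _ ▸ h).2
  have := List.append_inj htl (by simp [hl])
  obtain ⟨hcv, htail⟩ := this
  have hq'' : q = q' := by simpa using htail
  have hpp : p = p' := by
    have e1 := unconv_conv (bgood_iff.mp hp).1
    have e2 := unconv_conv (bgood_iff.mp hp').1
    rw [← e1, ← e2, hcv]
  exact ⟨hpp, hq''⟩

lemma bgood_cons_zero {w : List ℤ} : BGood ((0:ℤ) :: w) ↔ BGood w := by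
  constructor
  · rintro ⟨⟨h1, h2, h3⟩, h4⟩
    refine ⟨⟨fun s hs => h1 s (List.mem_cons_of_mem _ hs), fun k => ?_, ?_⟩, fun j hj => ?_⟩
    · have := h2 (k + 1)
      simpa [List.take_succ_cons] using this
    · simpa using h3
    · have := h4 (j + 1) (by simpa using hj)
      simpa [List.take_succ_cons] using this
  · rintro ⟨⟨h1, h2, h3⟩, h4⟩
    refine ⟨⟨?_, fun k => ?_, ?_⟩, fun j hj => ?_⟩
    · intro s hs
      rcases List.mem_cons.mp hs with rfl | hs
      · norm_num
      · exact h1 s hs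
    · cases k with
      | zero => simp
      | succ k => simpa [List.take_succ_cons] using h2 k
    · simpa using h3
    · cases j with
      | zero => simp
      | succ j =>
        have := h4 j (by simpa using hj)
        simpa [List.take_succ_cons] using this

lemma exists_decode {n : ℕ} {w : List ℤ} (hw : BGood w) (hlen : w.length = n + 1)
    (hh : w.headI ≠ 0) :
    ∃ k, k < n ∧ ∃ p q, (BGood p ∧ p.length = k) ∧ (BGood q ∧ q.length = n - 1 - k) ∧
      w = decode p q := by
  obtain ⟨⟨hw1, hw2, hwsum⟩, hw4⟩ := hw
  cases w with
  | nil => simp at hlen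
  | cons a r =>
  simp only [List.headI_cons] at hh
  have hr : r.length = n := by simpa using hlen
  have ha : 1 ≤ a := by
    have := hw2 1
    simp [List.take_succ_cons] at this
    omega
  -- minimal return time
  have hex : ∃ k, (((a :: r) : List ℤ).take (k + 1)).sum = 0 := by
    refine ⟨n, ?_⟩
    rw [List.take_of_length_le (by simp [hr])]
    exact hwsum
  set k₀ := Nat.find hex with hk₀def
  have hP : (((a :: r) : List ℤ).take (k₀ + 1)).sum = 0 := Nat.find_spec hex
  have hmin : ∀ i, i < k₀ → (((a :: r) : List ℤ).take (i + 1)).sum ≠ 0 :=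
    fun i hi => Nat.find_min hex hi
  have hk₀n : k₀ ≤ n := Nat.find_min' hex (by
    rw [List.take_of_length_le (by simp [hr])]; exact hwsum)
  have hk₀1 : 1 ≤ k₀ := by
    by_contra hcon
    have : k₀ = 0 := by omega
    rw [this] at hP
    simp [List.take_succ_cons] at hP
    omega
  have hpos : ∀ i, 1 ≤ i → i ≤ k₀ → 1 ≤ (((a :: r) : List ℤ).take i).sum := by
    intro i h1 h2
    have h0 := hw2 i
    have hne : (((a :: r) : List ℤ).take i).sum ≠ 0 := by
      have : i - 1 < k₀ := by omega
      have := hmin (i - 1) this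
      have heq : i - 1 + 1 = i := by omega
      rwa [heq] at this
    omega
  clear_value k₀
  obtain ⟨j, rfl⟩ : ∃ j, k₀ = j + 1 := ⟨k₀ - 1, by omega⟩
  have hjr : j < r.length := by omega
  set s := r.get ⟨j, hjr⟩ with hsdef
  have hs : r[j]? = some s := List.getElem?_eq_getElem hjr
  have htks : r.take (j + 1) = r.take j ++ [s] := by
    rw [List.take_succ]
    have hs2 : r[j]? = some s := hs
    rw [hs2]
    rfl
  have hsum2 : (((a :: r) : List ℤ).take (j + 2)).sum = a + (r.take j).sum + s := by
    have : j + 2 = (j + 1) + 1 := rfl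
    rw [this, List.take_succ_cons, htks]
    simp
    ring
  have hsum1 : (((a :: r) : List ℤ).take (j + 1)).sum = a + (r.take j).sum := by
    rw [List.take_succ_cons]
    simp
  have hs_mem : s ∈ r := List.get_mem r ⟨j, hjr⟩
  have hs_ge : -1 ≤ s := hw1 s (List.mem_cons_of_mem _ hs_mem)
  have hpos1 : 1 ≤ a + (r.take j).sum := by
    have := hpos (j + 1) (by omega) (by omega)
    rwa [hsum1] at this
  have hseq : s = -1 := by
    rw [hsum2] at hP
    omega
  have hmsum : (r.take j).sum = 1 - a := by
    rw [hsum2, hseq] at hP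
    omega
  set m := r.take j with hmdef
  set v := r.drop (j + 1) with hvdef
  have hmlen : m.length = j := by
    rw [hmdef, List.length_take]
    omega
  have hrdec : r = m ++ (-1 :: v) := by
    conv_lhs => rw [← List.take_append_drop (j + 1) r]
    rw [htks, hseq]
    simp [hvdef]
  -- m conditions
  have hm_ge : ∀ x ∈ m, -1 ≤ x := fun x hx =>
    hw1 x (List.mem_cons_of_mem _ ((List.take_sublist j r).subset hx))
  have hm_ne : ∀ x ∈ m, x ≠ 0 := by
    intro x hx hx0
    subst hx0
    obtain ⟨l, hl⟩ := List.mem_iff_getElem?.mp hx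
    have hlj : l < j := by
      have h1 : l < m.length := (List.getElem?_eq_some_iff.mp hl).choose
      omega
    have hget : ((a :: r) : List ℤ)[l + 1]? = some 0 := by
      rw [List.getElem?_cons_succ, ← List.getElem?_take_of_lt hlj]
      exact hl
    have := hw4 (l + 1) hget
    have := hpos (l + 1) (by omega) (by omega)
    omega
  have hm_take : ∀ l, l ≤ j → (m.take l).sum = (((a :: r) : List ℤ).take (l + 1)).sum - a := by
    intro l hl
    rw [List.take_succ_cons, List.sum_cons, hmdef, List.take_take, min_eq_left hl]
    ring
  have hm_split : ∀ l, (m.take l).sum + (m.drop l).sum = m.sum := by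
    intro l
    rw [← List.sum_append, List.take_append_drop]
  have hm_sum : m.sum = 1 - a := hmsum
  have hm_drop : ∀ l, (m.drop l).sum ≤ 0 := by
    intro l
    have hsp := hm_split l
    rcases Nat.lt_or_ge l 1 with hl | hl
    · have : l = 0 := by omega
      subst this
      simp only [List.take_zero, List.sum_nil, List.drop_zero] at hsp ⊢
      omega
    rcases le_or_gt l j with hlj | hlj
    · have h1 := hm_take l hlj
      have h2 := hpos (l + 1) (by omega) (by omega)
      omega
    · have : m.take l = m := List.take_of_length_le (by rw [hmlen]; omega)
      rw [this] at hsp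
      omega
  -- build p
  obtain ⟨hgoodp, hsump⟩ := unconv_spec m 0 le_rfl hm_ge hm_ne hm_drop (by omega)
  set p := unconv 0 m with hpdef
  have hconv : conv p = m := conv_unconv m 0 hm_ne
  have hplen : p.length = j := by
    rw [← conv_length p, hconv, hmlen]
  have hpsum : p.sum = 0 := by omega
  have hpB : BGood p := bgood_iff.mpr ⟨hgoodp, hpsum⟩
  have hcount : (p.count 0 : ℤ) = a - 1 := by
    have := conv_sum p
    rw [hconv, hm_sum, hpsum] at this
    omega
  -- v conditions
  have hvlen : v.length = n - 1 - j := by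
    rw [hvdef, List.length_drop]
    omega
  have hW1len : (((a :: r) : List ℤ).take (j + 2)).length = j + 2 := by
    rw [List.length_take]
    simp [hr]
    omega
  have hwdec : ((a :: r) : List ℤ) = ((a :: r) : List ℤ).take (j + 2) ++ v := by
    conv_lhs => rw [← List.take_append_drop (j + 2) ((a :: r) : List ℤ)]
    congr 1
  have htkv : ∀ i, (((a :: r) : List ℤ).take (j + 2 + i)).sum = (v.take i).sum := by
    intro i
    conv_lhs => rw [hwdec]
    rw [List.take_append]
    rw [List.take_of_length_le (by rw [hW1len]; omega)]
    rw [List.sum_append, hP]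
    rw [hW1len]
    have : j + 2 + i - (j + 2) = i := by omega
    rw [this]
    ring
  have hvB : BGood v := by
    refine ⟨⟨?_, fun k => ?_, ?_⟩, ?_⟩
    · intro x hx
      exact hw1 x (List.mem_cons_of_mem _ ((List.drop_sublist (j+1) r).subset hx))
    · have := hw2 (j + 2 + k)
      rwa [htkv k] at this
    · have h1 : ((a :: r) : List ℤ).sum = (((a :: r) : List ℤ).take (j + 2)).sum + v.sum := by
        conv_lhs => rw [hwdec]
        rw [List.sum_append]
      rw [hwsum, hP] at h1
      omega
    · intro i hi
      have hget : ((a :: r) : List ℤ)[j + 2 + i]? = some 0 := by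
        have : j + 2 + i = (j + 1 + i) + 1 := by omega
        rw [this, List.getElem?_cons_succ]
        rw [hvdef, List.getElem?_drop] at hi
        exact hi
      have := hw4 (j + 2 + i) hget
      rwa [htkv i] at this
  refine ⟨j, by omega, p, v, ⟨hpB, hplen⟩, ⟨hvB, hvlen⟩, ?_⟩
  rw [decode, hconv, hcount]
  rw [show (a : ℤ) - 1 + 1 = a by ring]
  rw [← hrdec]

lemma mem_structure {n : ℕ} {w : List ℤ} :
    (BGood w ∧ w.length = n + 1) ↔
      ((∃ w', (BGood w' ∧ w'.length = n) ∧ w = 0 :: w') ∨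
       (∃ k, k < n ∧ ∃ p q, (BGood p ∧ p.length = k) ∧ (BGood q ∧ q.length = n - 1 - k) ∧
          w = decode p q)) := by
  constructor
  · rintro ⟨hw, hlen⟩
    by_cases hh : w.headI = 0
    · left
      cases w with
      | nil => simp at hlen
      | cons a r =>
        simp only [List.headI_cons] at hh
        subst hh
        exact ⟨r, ⟨bgood_cons_zero.mp hw, by simpa using hlen⟩, rfl⟩
    · right
      exact exists_decode hw hlen hh
  · rintro (⟨w', ⟨hw', hlen'⟩, rfl⟩ | ⟨k, hk, p, q, ⟨hp, hpl⟩, ⟨hq, hql⟩, rfl⟩)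
    · exact ⟨bgood_cons_zero.mpr hw', by simp [hlen']⟩
    · refine ⟨decode_bgood hp hq, ?_⟩
      rw [decode_length, hpl, hql]
      omega

lemma finite_aux (S : Finset ℤ) : ∀ n : ℕ, {w : List ℤ | w.length = n ∧ ∀ s ∈ w, s ∈ S}.Finite := by
  intro n
  induction n with
  | zero =>
    apply Set.Finite.subset (Set.finite_singleton ([] : List ℤ))
    rintro w ⟨hlen, -⟩
    simp [List.length_eq_zero_iff.mp hlen]
  | succ n ih =>
    apply Set.Finite.subset (((S.finite_toSet.prod ih).image (fun x : ℤ × List ℤ => x.1 :: x.2)))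
    rintro w ⟨hlen, hmem⟩
    cases w with
    | nil => simp at hlen
    | cons a r =>
      exact ⟨(a, r), ⟨hmem a (List.mem_cons_self), by simpa using hlen,
        fun s hs => hmem s (List.mem_cons_of_mem _ hs)⟩, rfl⟩

lemma sum_ge_neg_length : ∀ (l : List ℤ), (∀ s ∈ l, -1 ≤ s) → -(l.length : ℤ) ≤ l.sum := by
  intro l
  induction l with
  | nil => simp
  | cons a r ih =>
    intro h
    have h1 := h a (List.mem_cons_self)
    have h2 := ih (fun s hs => h s (List.mem_cons_of_mem _ hs))
    simp only [List.sum_cons, List.length_cons]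
    push_cast
    linarith

lemma elem_bound {w : List ℤ} (hw : IsLukas w) : ∀ s ∈ w, s ≤ (w.length : ℤ) := by
  obtain ⟨h1, h2, h3⟩ := hw
  intro s hs
  obtain ⟨i, hi⟩ := List.mem_iff_getElem?.mp hs
  have hil : i < w.length := (List.getElem?_eq_some_iff.mp hi).choose
  have htk : w.take (i + 1) = w.take i ++ [s] := by
    rw [List.take_succ]
    have : w[i]? = some s := hi
    rw [this]
    rfl
  have hsplit : (w.take (i + 1)).sum + (w.drop (i + 1)).sum = w.sum := by
    rw [← List.sum_append, List.take_append_drop]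
  have hdropge : -(((w.drop (i + 1)).length : ℤ)) ≤ (w.drop (i + 1)).sum :=
    sum_ge_neg_length _ (fun x hx => h1 x ((List.drop_sublist _ _).subset hx))
  have hdl : ((w.drop (i + 1)).length : ℤ) ≤ (w.length : ℤ) := by
    simp [List.length_drop]
  have htki : 0 ≤ (w.take i).sum := h2 i
  have : (w.take (i + 1)).sum = (w.take i).sum + s := by
    rw [htk]
    simp
  rw [h3] at hsplit
  linarith

lemma bs_finite (n : ℕ) : {w : List ℤ | BGood w ∧ w.length = n}.Finite := by
  apply Set.Finite.subset (finite_aux (Finset.Icc (-1) (n : ℤ)) n)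
  rintro w ⟨hw, hlen⟩
  refine ⟨hlen, fun s hs => Finset.mem_Icc.mpr ⟨hw.1.1 s hs, ?_⟩⟩
  have := elem_bound hw.1 s hs
  rw [hlen] at this
  exact this

noncomputable def T (n : ℕ) : Finset (List ℤ) := (bs_finite n).toFinset

lemma mem_T {n : ℕ} {w : List ℤ} : w ∈ T n ↔ (BGood w ∧ w.length = n) :=
  Set.Finite.mem_toFinset _

lemma card_T_rec (n : ℕ) :
    (T (n + 1)).card = (T n).card + ∑ k ∈ Finset.range n, (T k).card * (T (n - 1 - k)).card := by
  classical
  have hT : T (n + 1) = (T n).image (fun w => (0 : ℤ) :: w) ∪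
      (Finset.range n).biUnion
        (fun k => ((T k) ×ˢ (T (n - 1 - k))).image (fun pq => decode pq.1 pq.2)) := by
    ext w
    simp only [mem_T, Finset.mem_union, Finset.mem_image, Finset.mem_biUnion, Finset.mem_range,
      Finset.mem_product, Prod.exists]
    rw [mem_structure]
    constructor
    · rintro (⟨w', hw', rfl⟩ | ⟨k, hk, p, q, hp, hq, rfl⟩)
      · exact Or.inl ⟨w', hw', rfl⟩
      · exact Or.inr ⟨k, hk, p, q, ⟨hp, hq⟩, rfl⟩
    · rintro (⟨w', hw', rfl⟩ | ⟨k, hk, p, q, ⟨hp, hq⟩, rfl⟩)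
      · exact Or.inl ⟨w', hw', rfl⟩
      · exact Or.inr ⟨k, hk, p, q, hp, hq, rfl⟩
  have hdisj : Disjoint ((T n).image (fun w => (0 : ℤ) :: w))
      ((Finset.range n).biUnion
        (fun k => ((T k) ×ˢ (T (n - 1 - k))).image (fun pq => decode pq.1 pq.2))) := by
    rw [Finset.disjoint_left]
    rintro w hw1 hw2
    obtain ⟨w', _, rfl⟩ := Finset.mem_image.mp hw1
    obtain ⟨k, -, hw2⟩ := Finset.mem_biUnion.mp hw2
    obtain ⟨⟨p, q⟩, -, heq⟩ := Finset.mem_image.mp hw2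
    rw [decode] at heq
    have := (List.cons.injEq _ _ _ _ ▸ heq).1
    have h0 : (0 : ℤ) ≤ (p.count 0 : ℤ) := Int.ofNat_nonneg _
    omega
  rw [hT, Finset.card_union_of_disjoint hdisj,
    Finset.card_image_of_injective _ (fun a b h => by injection h),
    Finset.card_biUnion]
  · congr 1
    apply Finset.sum_congr rfl
    intro k hk
    rw [Finset.card_image_of_injOn, Finset.card_product]
    rintro ⟨p, q⟩ hpq ⟨p', q'⟩ hpq' heq
    simp only [Finset.coe_product, Set.mem_prod, Finset.mem_coe, mem_T] at hpq hpq'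
    obtain ⟨hpp, hqq⟩ := decode_inj hpq.1.1 hpq.2.1 hpq'.1.1 hpq'.2.1 heq
    simp [hpp, hqq]
  · -- pairwise disjoint
    intro x hx y hy hxy
    rw [Function.onFun, Finset.disjoint_left]
    rintro w hw1 hw2
    obtain ⟨⟨p, q⟩, hpq, rfl⟩ := Finset.mem_image.mp hw1
    obtain ⟨⟨p', q'⟩, hpq', heq⟩ := Finset.mem_image.mp hw2
    simp only [Finset.mem_product, mem_T] at hpq hpq'
    obtain ⟨hpp, -⟩ := decode_inj hpq'.1.1 hpq'.2.1 hpq.1.1 hpq.2.1 heq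
    apply hxy
    rw [← hpq.1.2, ← hpq'.1.2, hpp]

lemma motzkin_succ (n : ℕ) :
    motzkin (n + 1) = motzkin n + ∑ k ∈ Finset.range n, motzkin k * motzkin (n - 1 - k) := by
  rw [motzkin]
  exact congrArg (motzkin n + ·)
    (Finset.sum_attach (Finset.range n) (fun k => motzkin k * motzkin (n - 1 - k)))

lemma T_card_eq (n : ℕ) : (T n).card = motzkin n := by
  induction n using Nat.strong_induction_on with
  | _ n ih =>
    match n with
    | 0 =>
      have h0 : T 0 = {([] : List ℤ)} := by
        ext w
        simp only [mem_T, Finset.mem_singleton]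
        constructor
        · rintro ⟨-, hlen⟩
          exact List.length_eq_zero_iff.mp hlen
        · rintro rfl
          exact ⟨⟨⟨by simp, by simp, by simp⟩, fun j hj => by simp at hj⟩, rfl⟩
      rw [h0, motzkin]
      simp
    | (m + 1) =>
      rw [card_T_rec, motzkin_succ, ih m (Nat.lt_succ_self m)]
      congr 1
      apply Finset.sum_congr rfl
      intro k hk
      have hk' := Finset.mem_range.mp hk
      rw [ih k (by omega), ih (m - 1 - k) (by omega)]

end LukasAux

/-- The number of Łukasiewicz paths of length `n` with no flat step at positive
height equals the `n`-th Motzkin number. -/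
theorem lukas_no_flat_pos_height_card (n : ℕ) :
    Set.ncard {w : List ℤ | IsLukas w ∧ NoFlatAtPosHeight w ∧ w.length = n} =
      motzkin n := by
  have hset : {w : List ℤ | IsLukas w ∧ NoFlatAtPosHeight w ∧ w.length = n} =
      ↑(LukasAux.T n) := by
    ext w
    simp only [Set.mem_setOf_eq, Finset.coe_sort_coe, Finset.mem_coe, LukasAux.mem_T,
      LukasAux.BGood]
    tauto
  rw [hset, Set.ncard_coe_finset, LukasAux.T_card_eq]
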